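/- Let (A, {•,•}_J) be a Jacobi algebra over a field k and (A, 𝒥¹(A)) its canonical Lie–Rinehart algebra. The map γ : A ⊗ A → A, a ⊗ b ↦ {a,b}_J, vanishes on I² (where I = Ker of multiplication), hence descends to a well-defined map φ : 𝒥¹(A) → A with φ(a·j¹(b)) = {a,b}_J. -/

import Mathlib

open TensorProduct

/-- For a Jacobi algebra `(A, J)` over a field `k`, the map
`γ : A ⊗ A → A`, `a ⊗ b ↦ J a b`, vanishes on `I²` and hence descends to a
well-defined map `φ : 𝒥¹(A) → A` with `φ (a • j¹ b) = J a b`. -/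
theorem jacobi_connection_well_defined
    (k A : Type*) [Field k] [CommRing A] [Algebra k A]
    (J : A → A → A)
    (hbilₗ : ∀ (r : k) (a a' b : A), J (r • a + a') b = r • J a b + J a' b)
    (hbilᵣ : ∀ (r : k) (a b b' : A), J a (r • b + b') = r • J a b + J a b')
    (hskew : ∀ a b, J a b = - J b a)
    (hjacobi : ∀ a b c, J a (J b c) + J b (J c a) + J c (J a b) = 0)
    (hleib : ∀ a b c, J (a * b) c = a * J b c + b * J a c - a * b * J 1 c) :
    ∃ γ : A ⊗[k] A →ₗ[k] A,
      (∀ a b : A, γ (a ⊗ₜ[k] b) = J a b) ∧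
      (∀ x ∈ (KaehlerDifferential.ideal k A ^ 2 : Ideal (A ⊗[k] A)), γ x = 0) ∧
      (letI Q := (A ⊗[k] A) ⧸ (KaehlerDifferential.ideal k A ^ 2)
       letI π : A ⊗[k] A → Q := Ideal.Quotient.mk (KaehlerDifferential.ideal k A ^ 2)
       letI j1 : A → Q := fun a => π ((1 : A) ⊗ₜ[k] a)
       ∃ φ : Q →ₗ[k] A,
        (∀ x : A ⊗[k] A, φ (π x) = γ x) ∧
        (∀ a b : A, φ (a • j1 b) = J a b)) := by
  classical
  -- basic linearity facts
  have haddₗ : ∀ a a' b : A, J (a + a') b = J a b + J a' b := by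
    intro a a' b; simpa using hbilₗ 1 a a' b
  have haddᵣ : ∀ a b b' : A, J a (b + b') = J a b + J a b' := by
    intro a b b'; simpa using hbilᵣ 1 a b b'
  have hzeroₗ : ∀ b : A, J 0 b = 0 := by
    intro b
    have h : J (0:A) b = J 0 b + J 0 b := by simpa using haddₗ 0 0 b
    exact (right_eq_add.mp h)
  have hzeroᵣ : ∀ a : A, J a 0 = 0 := by
    intro a
    have h : J a (0:A) = J a 0 + J a 0 := by simpa using haddᵣ a 0 0
    exact (right_eq_add.mp h)
  have hsmulₗ : ∀ (r : k) (a b : A), J (r • a) b = r • J a b := by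
    intro r a b
    have := hbilₗ r a 0 b
    simpa [hzeroₗ] using this
  have hsmulᵣ : ∀ (r : k) (a b : A), J a (r • b) = r • J a b := by
    intro r a b
    have := hbilᵣ r a b 0
    simpa [hzeroᵣ] using this
  -- the bilinear map
  set B : A →ₗ[k] A →ₗ[k] A := LinearMap.mk₂ k J haddₗ hsmulₗ haddᵣ hsmulᵣ with hB
  set γ : A ⊗[k] A →ₗ[k] A := TensorProduct.lift B with hγ
  have hγt : ∀ a b : A, γ (a ⊗ₜ[k] b) = J a b := fun a b => rfl
  -- right Leibniz
  have hleibᵣ : ∀ x y z : A, J x (y * z) = y * J x z + z * J x y - y * z * J x 1 := by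
    intro x y z
    linear_combination hskew x (y*z) - hleib y z x - y * hskew x z - z * hskew x y
      + y * z * hskew x 1
  -- the key generator identity
  have key : ∀ a b f g : A,
      J (a*f) (b*g) - J (a*(f*g)) b - J (a*b*f) g + J (a*b*(f*g)) 1 = 0 := by
    intro a b f g
    linear_combination hleib a f (b*g) + a * hleibᵣ f b g + f * hleibᵣ a b g
      - (a*f) * hleibᵣ 1 b g - hleib a (f*g) b - a * hleib f g b - hleib (a*b) f g
      - f * hleib a b g + hleib (a*b) (f*g) 1 + (a*b) * hleib f g 1 + (f*g) * hleib a b 1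
      + (a*b*f) * hskew 1 g + (a*f*g) * hskew 1 b - (a*f) * hskew g b
      - (a*b*f*g) * hskew 1 1
  -- the span description of the ideal
  set I : Ideal (A ⊗[k] A) := KaehlerDifferential.ideal k A with hI
  set gens : Set (A ⊗[k] A) := Set.range (fun p : A × A => p.1 ⊗ₜ[k] p.2 - (p.1 * p.2) ⊗ₜ[k] 1)
    with hgens
  set S : Submodule k (A ⊗[k] A) := Submodule.span k gens with hS
  have hmem : ∀ x ∈ I, x ∈ S := by
    intro x hx
    have hmul : Algebra.TensorProduct.lmul' (S := A) k x = 0 := by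
      simpa [hI, RingHom.mem_ker] using hx
    have hρ : ∀ y : A ⊗[k] A,
        y - (Algebra.TensorProduct.lmul' (S := A) k y) ⊗ₜ[k] (1:A) ∈ S := by
      intro y
      induction y using TensorProduct.induction_on with
      | zero => simp
      | tmul a b =>
          refine Submodule.subset_span ⟨(a, b), ?_⟩
          simp
      | add y z hy hz =>
          have : (y + z) - (Algebra.TensorProduct.lmul' (S := A) k (y + z)) ⊗ₜ[k] (1:A)
              = (y - (Algebra.TensorProduct.lmul' (S := A) k y) ⊗ₜ[k] (1:A))
                + (z - (Algebra.TensorProduct.lmul' (S := A) k z) ⊗ₜ[k] (1:A)) := by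
            rw [map_add, TensorProduct.add_tmul]; ring
          rw [this]; exact S.add_mem hy hz
    have := hρ x
    rwa [hmul, TensorProduct.zero_tmul, sub_zero] at this
  -- γ vanishes on products of elements of S
  have hprod : ∀ x ∈ S, ∀ y ∈ S, γ (x * y) = 0 := by
    set Φ : A ⊗[k] A →ₗ[k] A ⊗[k] A →ₗ[k] A := (LinearMap.mul k (A ⊗[k] A)).compr₂ γ
      with hΦdef
    have hΦ : ∀ x y, Φ x y = γ (x * y) := fun x y => rfl
    have hgen : ∀ x ∈ gens, ∀ y ∈ gens, Φ x y = 0 := by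
      rintro _ ⟨⟨a, b⟩, rfl⟩ _ ⟨⟨f, g⟩, rfl⟩
      rw [hΦ]
      have : (a ⊗ₜ[k] b - (a*b) ⊗ₜ[k] 1) * (f ⊗ₜ[k] g - (f*g) ⊗ₜ[k] 1)
          = (a*f) ⊗ₜ[k] (b*g) - (a*(f*g)) ⊗ₜ[k] b - (a*b*f) ⊗ₜ[k] g
            + (a*b*(f*g)) ⊗ₜ[k] 1 := by
        simp only [sub_mul, mul_sub, Algebra.TensorProduct.tmul_mul_tmul, mul_one, one_mul]
        ring_nf
      rw [this, map_add, map_sub, map_sub, hγt, hγt, hγt, hγt]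
      linear_combination key a b f g
    have step1 : ∀ x ∈ gens, S ≤ LinearMap.ker (Φ x) := by
      intro x hx
      rw [hS, Submodule.span_le]
      intro y hy
      exact hgen x hx y hy
    intro x hx y hy
    rw [← hΦ]
    have : S ≤ LinearMap.ker (Φ.flip y) := by
      rw [hS, Submodule.span_le]
      intro z hz
      simpa using step1 z hz hy
    exact this hx
  -- γ vanishes on I^2
  have hvanish : ∀ x ∈ (I ^ 2 : Ideal (A ⊗[k] A)), γ x = 0 := by
    intro x hx
    rw [pow_two] at hx
    refine Submodule.mul_induction_on hx ?_ ?_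
    · intro a ha b hb
      exact hprod a (hmem a ha) b (hmem b hb)
    · intro a b ha hb
      rw [map_add, ha, hb, add_zero]
  refine ⟨γ, hγt, hvanish, ?_⟩
  -- descend to the quotient
  set P : Submodule k (A ⊗[k] A) := (I ^ 2 : Ideal (A ⊗[k] A)).restrictScalars k with hP
  have hle : P ≤ LinearMap.ker γ := fun x hx => hvanish x hx
  set φ₀ : ((A ⊗[k] A) ⧸ P) →ₗ[k] A := Submodule.liftQ P γ hle with hφ₀
  set e := Submodule.Quotient.restrictScalarsEquiv k (I ^ 2 : Ideal (A ⊗[k] A))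
  refine ⟨φ₀.comp (e.symm : _ →ₗ[k] _), ?_, ?_⟩
  · intro x
    show φ₀ (e.symm (Submodule.Quotient.mk x)) = γ x
    rw [Submodule.Quotient.restrictScalarsEquiv_symm_mk]
    exact Submodule.liftQ_apply P γ x
  · intro a b
    have h1 : (a • (Ideal.Quotient.mk (I ^ 2) ((1:A) ⊗ₜ[k] b)))
        = Ideal.Quotient.mk (I ^ 2) (a ⊗ₜ[k] b) := by
      have : a • ((1:A) ⊗ₜ[k] b : A ⊗[k] A) = a ⊗ₜ[k] b := by
        rw [TensorProduct.smul_tmul', smul_eq_mul, mul_one]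
      rw [← this]
      rfl
    rw [h1]
    show φ₀ (e.symm (Submodule.Quotient.mk (a ⊗ₜ[k] b))) = J a b
    rw [Submodule.Quotient.restrictScalarsEquiv_symm_mk]
    exact hγt a b
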